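/- Let P be a finite non-abelian p-group and H = Q × A where Q is a finite q-group for a prime q, A is a finite abelian group with gcd(|A|, q) = 1. If Γ_P ≅ Γ_H, then |P| = |H|. -/

import Mathlib

open Subgroup

/-- An isomorphism of non-commuting graphs: a bijection between the non-central
elements preserving adjacency (`x` adjacent to `y` iff `x*y ≠ y*x`), equivalently
preserving commutativity. -/
def NCGraphIso (G H : Type*) [Group G] [Group H] :=
  { e : {x : G // x ∉ center G} ≃ {y : H // y ∉ center H} //
      ∀ a b, Commute a.1 b.1 ↔ Commute (e a).1 (e b).1 }

section Helpers

variable {G : Type*} [Group G] [Finite G]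

private lemma card_noncentral_add_card_center (K : Subgroup G) (h : center G ≤ K) :
    Nat.card {g : G // g ∈ K ∧ g ∉ center G} + Nat.card (center G) = Nat.card K := by
  classical
  have e1 : {g : G // g ∈ K ∧ g ∉ center G} ≃ {g : K // ¬ ((g : G) ∈ center G)} :=
    { toFun := fun x => ⟨⟨x.1, x.2.1⟩, x.2.2⟩
      invFun := fun y => ⟨y.1.1, y.1.2, y.2⟩
      left_inv := fun x => rfl
      right_inv := fun y => rfl }
  have e2 : {g : K // ((g : G) ∈ center G)} ≃ center G :=
    { toFun := fun x => ⟨x.1.1, x.2⟩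
      invFun := fun z => ⟨⟨z.1, h z.2⟩, z.2⟩
      left_inv := fun x => rfl
      right_inv := fun z => rfl }
  have hsum := Nat.card_congr (Equiv.sumCompl (fun g : K => (g : G) ∈ center G))
  rw [Nat.card_sum] at hsum
  rw [Nat.card_congr e1, Nat.card_congr e2.symm]
  omega

private lemma card_commuting_add_card_center (x : G) :
    Nat.card {b : {g : G // g ∉ center G} // Commute x b.1} + Nat.card (center G)
      = Nat.card (centralizer ({x} : Set G)) := by
  have e : {b : {g : G // g ∉ center G} // Commute x b.1}
      ≃ {g : G // g ∈ centralizer ({x} : Set G) ∧ g ∉ center G} :=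
    { toFun := fun b => ⟨b.1.1, Subgroup.mem_centralizer_singleton_iff.mpr b.2.symm, b.1.2⟩
      invFun := fun g => ⟨⟨g.1, g.2.2⟩, (Subgroup.mem_centralizer_singleton_iff.mp g.2.1).symm⟩
      left_inv := fun _ => rfl
      right_inv := fun _ => rfl }
  rw [Nat.card_congr e]
  exact card_noncentral_add_card_center _ (Subgroup.center_le_centralizer _)

private lemma card_noncenter_add_card_center (G : Type*) [Group G] [Finite G] :
    Nat.card {g : G // g ∉ center G} + Nat.card (center G) = Nat.card G := by
  classical
  have hsum := Nat.card_congr (Equiv.sumCompl (fun g : G => g ∈ center G))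
  rw [Nat.card_sum] at hsum
  have h2 : Nat.card {g : G // g ∈ center G} = Nat.card (center G) := rfl
  omega

private lemma card_lt_of_not_mem {K : Subgroup G} {g : G} (hg : g ∉ K) :
    Nat.card K < Nat.card G := by
  have h1 : (K : Set G) ⊂ Set.univ :=
    ⟨Set.subset_univ _, fun h => hg (h (Set.mem_univ g))⟩
  have h2 := Set.ncard_lt_ncard h1 Set.finite_univ
  rw [Set.ncard_univ] at h2
  have h3 : Nat.card K = (K : Set G).ncard := by
    rw [← Nat.card_coe_set_eq]
    rfl
  omega

end Helpers

/- Arithmetic core, case `p = q`. -/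
private lemma NT1 {p a m t n s c c' : ℕ} (hp : p.Prime) (hap : Nat.Coprime a p)
    (hmc : m < c) (hcn : c < n) (htc : t < c') (hcs : c' < s)
    (h1 : p ^ n + p ^ t * a = p ^ s * a + p ^ m)
    (h2 : p ^ c + p ^ t * a = p ^ c' * a + p ^ m) :
    p ^ n = p ^ s * a := by
  have hp1 : 1 < p := hp.one_lt
  have hpa_contra : ¬ (p ∣ a) := by
    intro hpa
    have h11 : p ∣ Nat.gcd a p := Nat.dvd_gcd hpa dvd_rfl
    rw [Nat.Coprime.gcd_eq_one hap] at h11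
    exact absurd (Nat.le_of_dvd one_pos h11) (by omega)
  -- step 1 : m = t
  have hmt : m = t := by
    rcases lt_trichotomy m t with h | h | h
    · exfalso
      have d1 : p ^ (m+1) ∣ p ^ n + p ^ t * a :=
        dvd_add (pow_dvd_pow p (show m+1 ≤ n by omega))
          ((pow_dvd_pow p (show m+1 ≤ t by omega)).mul_right a)
      rw [h1] at d1
      have d2 : p ^ (m+1) ∣ p ^ s * a := (pow_dvd_pow p (show m+1 ≤ s by omega)).mul_right a
      have hd := Nat.dvd_sub d1 d2
      rw [Nat.add_sub_cancel_left] at hd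
      exact absurd ((Nat.pow_dvd_pow_iff_le_right hp1).mp hd) (by omega)
    · exact h
    · exfalso
      have d1 : p ^ (t+1) ∣ p ^ s * a + p ^ m :=
        dvd_add ((pow_dvd_pow p (show t+1 ≤ s by omega)).mul_right a)
          (pow_dvd_pow p (show t+1 ≤ m by omega))
      rw [← h1] at d1
      have hd := Nat.dvd_sub d1 (pow_dvd_pow p (by omega) : p ^ (t+1) ∣ p ^ n)
      rw [Nat.add_sub_cancel_left] at hd
      rw [pow_succ] at hd
      exact hpa_contra ((Nat.mul_dvd_mul_iff_left (pow_pos hp.pos t)).mp hd)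
  subst hmt
  -- normalize exponents
  obtain ⟨u1, hu1, rfl⟩ : ∃ u, 1 ≤ u ∧ c = m + u := ⟨c - m, by omega, by omega⟩
  obtain ⟨E1, hE1, rfl⟩ : ∃ E, 1 ≤ E ∧ n = m + u1 + E := ⟨n - (m + u1), by omega, by omega⟩
  obtain ⟨v1, hv1, rfl⟩ : ∃ v, 1 ≤ v ∧ c' = m + v := ⟨c' - m, by omega, by omega⟩
  obtain ⟨E2, hE2, rfl⟩ : ∃ E, 1 ≤ E ∧ s = m + v1 + E := ⟨s - (m + v1), by omega, by omega⟩
  have hpz : ((p:ℤ)) ^ m ≠ 0 := pow_ne_zero _ (by exact_mod_cast hp.pos.ne')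
  have h1z : ((p:ℤ)) ^ (m + u1 + E1) + (p:ℤ) ^ m * a = (p:ℤ) ^ (m + v1 + E2) * a + (p:ℤ) ^ m := by
    exact_mod_cast h1
  have h2z : ((p:ℤ)) ^ (m + u1) + (p:ℤ) ^ m * a = (p:ℤ) ^ (m + v1) * a + (p:ℤ) ^ m := by
    exact_mod_cast h2
  -- reduced equation
  have h3 : p ^ (u1 + E1) + p ^ v1 * a = p ^ (v1 + E2) * a + p ^ u1 := by
    have h3z : ((p:ℤ)) ^ (u1 + E1) + (p:ℤ) ^ v1 * a = (p:ℤ) ^ (v1 + E2) * a + (p:ℤ) ^ u1 := by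
      apply mul_left_cancel₀ hpz
      ring_nf
      ring_nf at h1z h2z
      linarith [h1z, h2z]
    exact_mod_cast h3z
  -- step 2 : u1 = v1
  have huv : u1 = v1 := by
    rcases lt_trichotomy u1 v1 with h | h | h
    · exfalso
      have d1 : p ^ (u1+1) ∣ p ^ (u1 + E1) + p ^ v1 * a :=
        dvd_add (pow_dvd_pow p (show u1+1 ≤ u1+E1 by omega))
          ((pow_dvd_pow p (show u1+1 ≤ v1 by omega)).mul_right a)
      rw [h3] at d1
      have hd := Nat.dvd_sub d1 ((pow_dvd_pow p (show u1+1 ≤ v1+E2 by omega)).mul_right a)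
      rw [Nat.add_sub_cancel_left] at hd
      exact absurd ((Nat.pow_dvd_pow_iff_le_right hp1).mp hd) (by omega)
    · exact h
    · exfalso
      have d1 : p ^ (v1+1) ∣ p ^ (v1 + E2) * a + p ^ u1 :=
        dvd_add ((pow_dvd_pow p (show v1+1 ≤ v1+E2 by omega)).mul_right a)
          (pow_dvd_pow p (show v1+1 ≤ u1 by omega))
      rw [← h3] at d1
      have hd := Nat.dvd_sub d1 (pow_dvd_pow p (by omega) : p ^ (v1+1) ∣ p ^ (u1 + E1))
      rw [Nat.add_sub_cancel_left] at hd
      rw [pow_succ] at hd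
      exact hpa_contra ((Nat.mul_dvd_mul_iff_left (pow_pos hp.pos v1)).mp hd)
  subst huv
  -- step 3 : a = 1
  have ha1 : a = 1 := by
    have hz : ((a:ℤ) - 1) * ((p:ℤ) ^ (m + u1) - (p:ℤ) ^ m) = 0 := by
      linear_combination -h2z
    rcases mul_eq_zero.mp hz with h | h
    · have : (a:ℤ) = 1 := by linarith
      exact_mod_cast this
    · exfalso
      have hlt : (p:ℤ) ^ m < (p:ℤ) ^ (m + u1) := by
        have : p ^ m < p ^ (m + u1) := Nat.pow_lt_pow_right hp1 (by omega)
        exact_mod_cast this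
      linarith
  subst ha1
  simp only [mul_one] at h1 ⊢
  omega

/- Arithmetic core, case `p ≠ q`. -/
private lemma NT2 {p q a m t n s c c' : ℕ} (hp : p.Prime) (hq : q.Prime) (hpq : p ≠ q)
    (hmc : m < c) (hcn : c < n) (htc : t < c') (hcs : c' < s) (hsct : s ≤ c' + t)
    (h1 : p ^ n + q ^ t * a = q ^ s * a + p ^ m)
    (h2 : p ^ c + q ^ t * a = q ^ c' * a + p ^ m) :
    False := by
  have hp1 : 1 < p := hp.one_lt
  have hq1 : 1 < q := hq.one_lt
  obtain ⟨u, hu, rfl⟩ : ∃ u, 1 ≤ u ∧ c = m + u := ⟨c - m, by omega, by omega⟩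
  obtain ⟨E1, hE1, rfl⟩ : ∃ E, 1 ≤ E ∧ n = m + u + E := ⟨n - (m + u), by omega, by omega⟩
  obtain ⟨v, hv, rfl⟩ : ∃ v, 1 ≤ v ∧ c' = t + v := ⟨c' - t, by omega, by omega⟩
  obtain ⟨E2, hE2, hE2t, rfl⟩ : ∃ E, 1 ≤ E ∧ E ≤ t ∧ s = t + v + E :=
    ⟨s - (t + v), by omega, by omega, by omega⟩
  have hpz : ((p:ℤ)) ^ m ≠ 0 := pow_ne_zero _ (by exact_mod_cast hp.pos.ne')
  have h1z : ((p:ℤ)) ^ (m + u + E1) + (q:ℤ) ^ t * a = (q:ℤ) ^ (t + v + E2) * a + (p:ℤ) ^ m := by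
    exact_mod_cast h1
  have h2z : ((p:ℤ)) ^ (m + u) + (q:ℤ) ^ t * a = (q:ℤ) ^ (t + v) * a + (p:ℤ) ^ m := by
    exact_mod_cast h2
  have hcopqp : Nat.Coprime q p := (Nat.coprime_primes hq hp).mpr (Ne.symm hpq)
  -- divisibility 1 : q^t ∣ p^u - 1
  have hdvd1 : ((q:ℤ)) ^ t ∣ (p:ℤ) ^ u - 1 := by
    have hd : ((q:ℤ)) ^ t ∣ (p:ℤ) ^ m * ((p:ℤ) ^ u - 1) :=
      ⟨a * (q:ℤ) ^ v - a, by linear_combination h2z⟩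
    have hco : IsCoprime ((q:ℤ) ^ t) ((p:ℤ) ^ m) := by
      have : IsCoprime ((q:ℤ)) ((p:ℤ)) := by
        rw [Int.isCoprime_iff_gcd_eq_one]
        exact_mod_cast hcopqp
      exact (this.pow : IsCoprime ((q:ℤ) ^ t) ((p:ℤ) ^ m))
    exact hco.dvd_of_dvd_mul_left hd
  have hbound1 : (q:ℤ) ^ t + 1 ≤ (p:ℤ) ^ u := by
    have hpos : (0:ℤ) < (p:ℤ) ^ u - 1 := by
      have : 2 ≤ p ^ u := by
        calc 2 ≤ p := hp.two_le
        _ = p ^ 1 := (pow_one p).symm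
        _ ≤ p ^ u := Nat.pow_le_pow_right hp.pos hu
      have : (2:ℤ) ≤ (p:ℤ) ^ u := by exact_mod_cast this
      linarith
    have := Int.le_of_dvd hpos hdvd1
    linarith
  -- the cross equation
  have hcross : (((p:ℤ)) ^ (u + E1) - 1) * ((q:ℤ) ^ v - 1)
      = ((p:ℤ) ^ u - 1) * ((q:ℤ) ^ (v + E2) - 1) := by
    apply mul_left_cancel₀ hpz
    ring_nf
    have e1 := congrArg (fun x => x * ((q:ℤ) ^ v - 1)) h1z
    have e2 := congrArg (fun x => x * ((q:ℤ) ^ (v + E2) - 1)) h2z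
    ring_nf at e1 e2
    linarith [e1, e2]
  -- divisibility 2 : p^u ∣ q^E2 - 1
  have hdvd2 : ((p:ℤ)) ^ u ∣ (q:ℤ) ^ v * ((q:ℤ) ^ E2 - 1) :=
    ⟨(p:ℤ) ^ E1 + (q:ℤ) ^ (v + E2) - 1 - (p:ℤ) ^ E1 * (q:ℤ) ^ v, by linear_combination hcross⟩
  have hdvd2' : ((p:ℤ)) ^ u ∣ (q:ℤ) ^ E2 - 1 := by
    have hco : IsCoprime ((p:ℤ) ^ u) ((q:ℤ) ^ v) := by
      have : IsCoprime ((p:ℤ)) ((q:ℤ)) := by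
        rw [Int.isCoprime_iff_gcd_eq_one]
        exact_mod_cast hcopqp.symm
      exact this.pow
    exact hco.dvd_of_dvd_mul_left hdvd2
  have hbound2 : (p:ℤ) ^ u + 1 ≤ (q:ℤ) ^ E2 := by
    have hpos : (0:ℤ) < (q:ℤ) ^ E2 - 1 := by
      have : 2 ≤ q ^ E2 := by
        calc 2 ≤ q := hq.two_le
        _ = q ^ 1 := (pow_one q).symm
        _ ≤ q ^ E2 := Nat.pow_le_pow_right hq.pos hE2
      have : (2:ℤ) ≤ (q:ℤ) ^ E2 := by exact_mod_cast this
      linarith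
    have := Int.le_of_dvd hpos hdvd2'
    linarith
  have hbound3 : (q:ℤ) ^ E2 ≤ (q:ℤ) ^ t := by
    have : q ^ E2 ≤ q ^ t := Nat.pow_le_pow_right hq.pos hE2t
    exact_mod_cast this
  linarith

theorem stmt5 (p q : ℕ) (hp : p.Prime) (hq : q.Prime) (P Q A : Type*)
    [Group P] [Group Q] [CommGroup A] [Finite P] [Finite Q] [Finite A]
    (hP : IsPGroup p P) (hPna : ¬ ∀ a b : P, a * b = b * a)
    (hQ : IsPGroup q Q) (hA : Nat.Coprime (Nat.card A) q)
    (φ : NCGraphIso P (Q × A)) :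
    Nat.card P = Nat.card (Q × A) := by
  classical
  obtain ⟨e, he⟩ := φ
  haveI : Fact p.Prime := ⟨hp⟩
  haveI : Fact q.Prime := ⟨hq⟩
  obtain ⟨n, hn⟩ := IsPGroup.iff_card.mp hP
  obtain ⟨s, hs⟩ := IsPGroup.iff_card.mp hQ
  obtain ⟨m, hmn, hm⟩ := (Nat.dvd_prime_pow hp).mp
    (hn ▸ Subgroup.card_subgroup_dvd_card (center P))
  obtain ⟨t, hts, ht⟩ := (Nat.dvd_prime_pow hq).mp
    (hs ▸ Subgroup.card_subgroup_dvd_card (center Q))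
  set a := Nat.card A with ha_def
  -- a noncentral element of P
  push_neg at hPna
  obtain ⟨w1, w2, hw⟩ := hPna
  have hw1 : w1 ∉ center P := fun h => hw ((Subgroup.mem_center_iff.mp h w2).symm)
  -- center of the product
  have hcenterH : ∀ y : Q × A, y ∈ center (Q × A) ↔ y.1 ∈ center Q := by
    intro y
    constructor
    · intro hy
      rw [Subgroup.mem_center_iff] at hy ⊢
      intro g
      have := hy (g, 1)
      rw [Prod.ext_iff] at this
      exact this.1
    · intro hy
      rw [Subgroup.mem_center_iff] at hy ⊢
      intro g
      rw [Prod.ext_iff]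
      exact ⟨hy g.1, mul_comm g.2 y.2⟩
  -- a noncentral element of Q
  have hQna : ∃ x : Q, x ∉ center Q := by
    refine ⟨(e ⟨w1, hw1⟩).1.1, fun h => (e ⟨w1, hw1⟩).2 ?_⟩
    exact (hcenterH _).mpr h
  obtain ⟨x₂, hx₂⟩ := hQna
  have htls : t < s := by
    have h := card_lt_of_not_mem hx₂
    rw [hs, ht] at h
    exact (Nat.pow_lt_pow_iff_right hq.one_lt).mp h
  -- a noncentral element of Q with small conjugacy class
  have hkey : ∃ x₀ : Q, x₀ ∉ center Q ∧
      ¬ (q ^ (t+1) ∣ Nat.card (ConjClasses.mk x₀).carrier) := by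
    by_contra hcon
    push_neg at hcon
    have hfin : (ConjClasses.noncenter Q).Finite := Set.toFinite _
    have hdvd : q ^ (t+1) ∣ ∑ᶠ x ∈ ConjClasses.noncenter Q, Nat.card x.carrier := by
      rw [finsum_mem_eq_finite_toFinset_sum _ hfin]
      refine Finset.dvd_sum ?_
      intro cl hcl
      rw [Set.Finite.mem_toFinset] at hcl
      obtain ⟨x₀, rfl⟩ := ConjClasses.exists_rep cl
      refine hcon x₀ ?_
      intro hmem
      rw [ConjClasses.mem_noncenter] at hcl
      obtain ⟨y, hy, z, hz, hyz⟩ := hcl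
      have hrep : ∀ w : Q, w ∈ (ConjClasses.mk x₀).carrier → w = x₀ := by
        intro w hw
        rw [ConjClasses.mem_carrier_iff_mk_eq, ConjClasses.mk_eq_mk_iff_isConj] at hw
        obtain ⟨cc, hcc⟩ := isConj_iff.mp hw
        have hcomm := Subgroup.mem_center_iff.mp hmem cc⁻¹
        calc w = cc⁻¹ * (cc * w * cc⁻¹) * cc := by group
        _ = cc⁻¹ * x₀ * cc := by rw [hcc]
        _ = x₀ * cc⁻¹ * cc := by rw [hcomm]
        _ = x₀ := by group
      exact hyz ((hrep y hy).trans (hrep z hz).symm)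
    have hceq := Group.nat_card_center_add_sum_card_noncenter_eq_card Q
    have h1 : q ^ (t+1) ∣ Nat.card Q := by
      rw [hs]; exact pow_dvd_pow q (by omega)
    rw [← hceq] at h1
    have h2 := Nat.dvd_sub h1 hdvd
    rw [Nat.add_sub_cancel] at h2
    rw [ht] at h2
    exact absurd ((Nat.pow_dvd_pow_iff_le_right hq.one_lt).mp h2) (by omega)
  obtain ⟨x₀, hx₀, hx₀dvd⟩ := hkey
  -- orbit-stabilizer
  have horb : Nat.card (ConjClasses.mk x₀).carrier
      * Nat.card (centralizer ({x₀} : Set Q)) = Nat.card Q := by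
    have h1 : Nat.card (ConjAct Q) =
        Nat.card (ConjAct Q ⧸ MulAction.stabilizer (ConjAct Q) x₀)
          * Nat.card (MulAction.stabilizer (ConjAct Q) x₀) :=
      Subgroup.card_eq_card_quotient_mul_card_subgroup _
    have h2 : Nat.card (ConjAct Q ⧸ MulAction.stabilizer (ConjAct Q) x₀)
        = Nat.card (MulAction.orbit (ConjAct Q) x₀) :=
      (Nat.card_congr (MulAction.orbitEquivQuotientStabilizer _ _)).symm
    have h3 : Nat.card (MulAction.orbit (ConjAct Q) x₀)
        = Nat.card (ConjClasses.mk x₀).carrier :=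
      Nat.card_congr (Equiv.setCongr (ConjAct.orbit_eq_carrier_conjClasses x₀))
    have h4 : Nat.card (centralizer ({x₀} : Set Q))
        = Nat.card (MulAction.stabilizer (ConjAct Q) x₀) := by
      rw [Subgroup.centralizer_eq_comap_stabilizer]
      exact Nat.card_congr (Equiv.subtypeEquiv ConjAct.toConjAct.toEquiv (fun g => Iff.rfl))
    have h5 : Nat.card (ConjAct Q) = Nat.card Q := rfl
    rw [← h3, h4, ← h2]
    exact h1.symm
  have hcar_dvd : Nat.card (ConjClasses.mk x₀).carrier ∣ q ^ s :=
    ⟨Nat.card (centralizer ({x₀} : Set Q)), by rw [← hs]; exact horb.symm⟩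
  obtain ⟨E2, hE2s, hE2⟩ := (Nat.dvd_prime_pow hq).mp hcar_dvd
  have hE2t : E2 ≤ t := by
    by_contra hcontra
    exact hx₀dvd (hE2 ▸ pow_dvd_pow q (by omega))
  -- centralizer of x₀ in Q has cardinality q ^ (s - E2)
  have hcQ' : Nat.card (centralizer ({x₀} : Set Q)) = q ^ (s - E2) := by
    have h1 : q ^ E2 * Nat.card (centralizer ({x₀} : Set Q)) = q ^ s := by
      rw [← hE2, horb]
      exact hs
    have h1' : q ^ E2 * Nat.card (centralizer ({x₀} : Set Q)) = q ^ E2 * q ^ (s - E2) := by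
      rw [h1, ← pow_add]
      congr 1
      omega
    exact Nat.eq_of_mul_eq_mul_left (pow_pos hq.pos E2) h1'
  set c' := s - E2 with hc'_def
  have hsc't : s ≤ c' + t := by omega
  -- t < c'
  have htc' : t < c' := by
    have h0 := card_noncentral_add_card_center (G := Q) (centralizer ({x₀} : Set Q))
      (Subgroup.center_le_centralizer _)
    have hpos : 0 < Nat.card {g : Q // g ∈ centralizer ({x₀} : Set Q) ∧ g ∉ center Q} := by
      have : Nonempty {g : Q // g ∈ centralizer ({x₀} : Set Q) ∧ g ∉ center Q} :=
        ⟨⟨x₀, Subgroup.mem_centralizer_singleton_iff.mpr rfl, hx₀⟩⟩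
      exact Nat.card_pos
    have hlt : Nat.card (center Q) < Nat.card (centralizer ({x₀} : Set Q)) := by omega
    rw [ht, hcQ'] at hlt
    exact (Nat.pow_lt_pow_iff_right hq.one_lt).mp hlt
  -- c' < s
  have hc's : c' < s := by
    have hg : ∃ g : Q, g * x₀ ≠ x₀ * g := by
      rw [Subgroup.mem_center_iff] at hx₀
      push_neg at hx₀
      exact hx₀
    obtain ⟨g, hg⟩ := hg
    have hgnot : g ∉ centralizer ({x₀} : Set Q) := by
      intro hmem
      exact hg (Subgroup.mem_centralizer_singleton_iff.mp hmem)
    have := card_lt_of_not_mem hgnot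
    rw [hcQ', hs] at this
    exact (Nat.pow_lt_pow_iff_right hq.one_lt).mp this
  -- H-side subgroup cardinalities
  have hcardprod : ∀ K : Subgroup Q, Nat.card (K.prod (⊤ : Subgroup A)) = Nat.card K * a := by
    intro K
    rw [Nat.card_congr (K.prodEquiv (⊤ : Subgroup A)).toEquiv, Nat.card_prod,
      Subgroup.card_top]
  have hcenterH_eq : center (Q × A) = (center Q).prod (⊤ : Subgroup A) := by
    ext y
    rw [Subgroup.mem_prod]
    constructor
    · intro hy
      exact ⟨(hcenterH y).mp hy, trivial⟩
    · intro hy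
      exact (hcenterH y).mpr hy.1
  have hzH : Nat.card (center (Q × A)) = q ^ t * a := by
    rw [hcenterH_eq, hcardprod, ht]
  have hNH : Nat.card (Q × A) = q ^ s * a := by rw [Nat.card_prod, hs]
  have hcentH_eq : centralizer ({((x₀ : Q), (1 : A))} : Set (Q × A))
      = (centralizer ({x₀} : Set Q)).prod (⊤ : Subgroup A) := by
    ext ⟨b, cc⟩
    rw [Subgroup.mem_prod, Subgroup.mem_centralizer_singleton_iff,
      Subgroup.mem_centralizer_singleton_iff]
    constructor
    · intro hy
      rw [Prod.ext_iff] at hy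
      exact ⟨hy.1, trivial⟩
    · intro hy
      rw [Prod.ext_iff]
      exact ⟨hy.1, by simp⟩
  have hy₀ : ((x₀, (1:A)) : Q × A) ∉ center (Q × A) := fun h => hx₀ ((hcenterH _).mp h)
  -- total count equation (E1)
  have hVP := card_noncenter_add_card_center P
  have hVH := card_noncenter_add_card_center (Q × A)
  have hV_eq : Nat.card {g : P // g ∉ center P}
      = Nat.card {y : Q × A // y ∉ center (Q × A)} := Nat.card_congr e
  have hEq1 : Nat.card P + Nat.card (center (Q × A))
      = Nat.card (Q × A) + Nat.card (center P) := by omega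
  -- vertex equation (E2)
  set yv : {y : Q × A // y ∉ center (Q × A)} := ⟨(x₀, 1), hy₀⟩ with hyv_def
  set xv := e.symm yv with hxv_def
  have hcomm_eq : Nat.card {b : {g : P // g ∉ center P} // Commute xv.1 b.1}
      = Nat.card {b' : {y : Q × A // y ∉ center (Q × A)} // Commute yv.1 b'.1} := by
    refine Nat.card_congr (Equiv.subtypeEquiv e (fun b => ?_))
    have h := he xv b
    rwa [show e xv = yv from Equiv.apply_symm_apply e yv] at h
  have hP_cnt := card_commuting_add_card_center (G := P) xv.1
  have hH_cnt := card_commuting_add_card_center (G := Q × A) yv.1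
  have hEq2 : Nat.card (centralizer ({xv.1} : Set P)) + Nat.card (center (Q × A))
      = Nat.card (centralizer ({yv.1} : Set (Q × A))) + Nat.card (center P) := by omega
  -- cardinality of the H-side centralizer
  have hcH : Nat.card (centralizer ({yv.1} : Set (Q × A))) = q ^ c' * a := by
    have : yv.1 = ((x₀, (1:A)) : Q × A) := rfl
    rw [this, hcentH_eq, hcardprod, hcQ']
  -- cardinality of the P-side centralizer
  obtain ⟨c, hcn', hc⟩ := (Nat.dvd_prime_pow hp).mp
    (hn ▸ Subgroup.card_subgroup_dvd_card (centralizer ({xv.1} : Set P)))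
  -- m < c
  have hmc : m < c := by
    have hpos : 0 < Nat.card {b : {g : P // g ∉ center P} // Commute xv.1 b.1} := by
      have : Nonempty {b : {g : P // g ∉ center P} // Commute xv.1 b.1} :=
        ⟨⟨xv, Commute.refl xv.1⟩⟩
      exact Nat.card_pos
    have hlt : Nat.card (center P) < Nat.card (centralizer ({xv.1} : Set P)) := by omega
    rw [hm, hc] at hlt
    exact (Nat.pow_lt_pow_iff_right hp.one_lt).mp hlt
  -- c < n
  have hcn2 : c < n := by
    have hg : ∃ g : P, g * xv.1 ≠ xv.1 * g := by
      have := xv.2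
      rw [Subgroup.mem_center_iff] at this
      push_neg at this
      exact this
    obtain ⟨g, hg⟩ := hg
    have hgnot : g ∉ centralizer ({xv.1} : Set P) := by
      intro hmem
      exact hg (Subgroup.mem_centralizer_singleton_iff.mp hmem)
    have := card_lt_of_not_mem hgnot
    rw [hc, hn] at this
    exact (Nat.pow_lt_pow_iff_right hp.one_lt).mp this
  -- numeric equations
  have heq1 : p ^ n + q ^ t * a = q ^ s * a + p ^ m := by
    rw [← hn, ← hzH, ← hNH, ← hm]; exact hEq1
  have heq2 : p ^ c + q ^ t * a = q ^ c' * a + p ^ m := by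
    rw [← hc, ← hzH, ← hcH, ← hm]; exact hEq2
  -- conclude
  rcases eq_or_ne p q with hpq | hpq
  · subst hpq
    rw [hn, hNH]
    exact NT1 hp hA hmc hcn2 htc' hc's heq1 heq2
  · exact absurd (NT2 hp hq hpq hmc hcn2 htc' hc's hsc't heq1 heq2) not_false
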